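/- Lipschitz continuity of the approximating drivers: For every integer m ≥ 1 there exists a constant L_m > 0 such that |f_m(z,u) − f_m(z',u')| ≤ L_m ( |z − z'| + (∫ (u − u')² dν)^{1/2} ) for all z, z' ∈ ℝ and all Borel functions u, u' : ℝ → ℝ with ∫ u² dν < ∞ and ∫ (u')² dν < ∞. -/

import Mathlib

open MeasureTheory Set
open scoped ENNReal

noncomputable section

/-- The exponential penalty function `h_λ(x) = (e^{λx} − λx − 1)/λ`. -/
def hpen (lam x : ℝ) : ℝ := (Real.exp (lam * x) - lam * x - 1) / lam

/-- `φ(x) = arctan x` for `x > 0`, `φ(x) = x` for `x ≤ 0`. -/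
def phi0 (x : ℝ) : ℝ := if 0 < x then Real.arctan x else x

/-- The truncation from above `φ_m(x) = φ(x − m) + m`. -/
def phim (m : ℕ) (x : ℝ) : ℝ := phi0 (x - m) + m

/-- The plateau truncation `ρ_m`. -/
def rhom (m : ℕ) (x : ℝ) : ℝ :=
  if -((m : ℝ) + 1) < x ∧ x < -(m : ℝ) then x + m + 1
  else if -(m : ℝ) ≤ x ∧ x ≤ (m : ℝ) then 1
  else if (m : ℝ) < x ∧ x ≤ (m : ℝ) + 1 then (m : ℝ) + 1 - x
  else 0

/-- `ν_m`: the restriction of `ν` to `ℝ \ [−1/m, 1/m]`. -/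
def numeas (ν : Measure ℝ) (m : ℕ) : Measure ℝ :=
  ν.restrict (Set.Icc (-(1 / (m : ℝ))) (1 / (m : ℝ)))ᶜ

/-- The truncated no-signal part `f¹_m(z,u,p)` of the driver. -/
def f1m (ν : Measure ℝ) (η γ : ℝ → ℝ) (lam Cke : ℝ) (m : ℕ)
    (z : ℝ) (u : ℝ → ℝ) (p : ℝ) : ℝ :=
  lam / 2 * (p - (z + Cke / lam)) ^ 2 * rhom m z
    + (∫ e in {e | γ e = 0}, hpen lam (phim m (u e - p * η e)) ∂(numeas ν m))
    - p * ∫ e in {e | γ e = 0}, η e ∂ν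

/-- The truncated signal part `f²_m(g,u,p)` of the driver. -/
def f2m (η γ : ℝ → ℝ) (K : ℝ → Measure ℝ) (lam : ℝ) (m : ℕ)
    (g : ℝ) (u : ℝ → ℝ) (p : ℝ) : ℝ :=
  (∫ e in {e | γ e = g},
      (if 1 / (m : ℝ) < |e| then hpen lam (phim m (u e - p * η e)) else 0) ∂(K g))
    - p * ∫ e in {e | γ e = g}, η e ∂(K g)

/-- The truncated driver `f_m(z,u)`. -/
def fm (ν μ : Measure ℝ) (η γ : ℝ → ℝ) (K : ℝ → Measure ℝ)
    (lam Cke pil pib : ℝ) (m : ℕ) (z : ℝ) (u : ℝ → ℝ) : ℝ :=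
  (⨅ p : Set.Icc (-pil) pib, f1m ν η γ lam Cke m z u p)
    + (∫ g in ({0}ᶜ : Set ℝ), (⨅ p : Set.Icc (-pil) pib, f2m η γ K lam m g u p) ∂μ)
    - Cke * z - Cke ^ 2 / (2 * lam)

lemma arctan_lip (x y : ℝ) : |Real.arctan x - Real.arctan y| ≤ |x - y| := by
  have h : LipschitzWith 1 Real.arctan := by
    apply lipschitzWith_of_nnnorm_deriv_le Real.differentiable_arctan
    intro x
    have : ‖(1/(1+x^2) : ℝ)‖₊ ≤ 1 := by
      rw [← NNReal.coe_le_coe, coe_nnnorm, Real.norm_eq_abs, NNReal.coe_one,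
        abs_of_nonneg (by positivity), div_le_one (by positivity)]
      nlinarith [sq_nonneg x]
    simpa [Real.deriv_arctan] using this
  simpa [Real.dist_eq] using h.dist_le_mul x y

lemma phi0_eq (x : ℝ) : phi0 x = min x (Real.arctan x) := by
  have h := arctan_lip x 0
  simp only [Real.arctan_zero, sub_zero] at h
  rw [abs_le] at h
  unfold phi0
  rcases lt_or_ge 0 x with hx | hx
  · rw [if_pos hx, min_eq_right]
    cases abs_cases x with
    | inl hc => linarith [h.2]
    | inr hc => linarith
  · rw [if_neg (not_lt.2 hx), min_eq_left]
    cases abs_cases x with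
    | inl hc => linarith
    | inr hc => linarith [h.1]

lemma phi0_lip (x y : ℝ) : |phi0 x - phi0 y| ≤ |x - y| := by
  rw [phi0_eq, phi0_eq]
  refine (abs_min_sub_min_le_max _ _ _ _).trans (max_le le_rfl (arctan_lip x y))

lemma phi0_le (x : ℝ) : phi0 x ≤ 2 := by
  rw [phi0_eq]
  refine (min_le_right _ _).trans ((Real.arctan_lt_pi_div_two x).le.trans (by linarith [Real.pi_le_four]))

lemma phim_lip (m : ℕ) (x y : ℝ) : |phim m x - phim m y| ≤ |x - y| := by
  unfold phim
  simpa using phi0_lip (x - m) (y - m)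

lemma phim_le (m : ℕ) (x : ℝ) : phim m x ≤ m + 2 := by
  unfold phim
  linarith [phi0_le (x - m)]

lemma phim_zero (m : ℕ) : phim m 0 = 0 := by
  unfold phim phi0
  rw [if_neg (not_lt.2 (by rw [sub_nonpos]; exact_mod_cast Nat.zero_le m))]
  ring

lemma hpen_lip {lam b : ℝ} (hlam : 0 < lam) (hb : 0 ≤ b) :
    ∀ {x y : ℝ}, x ≤ b → y ≤ b → |hpen lam x - hpen lam y| ≤ Real.exp (lam * b) * |x - y| := by
  have key : ∀ x y : ℝ, x ≤ b → y ≤ b → y ≤ x →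
      |hpen lam x - hpen lam y| ≤ Real.exp (lam * b) * |x - y| := by
    intro x y hx hy hyx
    have h1 : Real.exp (lam * x) ≤ Real.exp (lam * b) :=
      Real.exp_le_exp.2 (by nlinarith)
    have h2 : Real.exp (lam * y) ≤ Real.exp (lam * x) :=
      Real.exp_le_exp.2 (by nlinarith)
    have h3 : Real.exp (lam * x) * (lam * (y - x) + 1) ≤ Real.exp (lam * y) := by
      have := Real.add_one_le_exp (lam * (y - x))
      calc Real.exp (lam * x) * (lam * (y - x) + 1)
          ≤ Real.exp (lam * x) * Real.exp (lam * (y - x)) := by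
            apply mul_le_mul_of_nonneg_left this (Real.exp_pos _).le
        _ = Real.exp (lam * y) := by rw [← Real.exp_add]; ring_nf
    have h4 : (1:ℝ) ≤ Real.exp (lam * b) := Real.one_le_exp (by positivity)
    have hxy : |x - y| = x - y := abs_of_nonneg (by linarith)
    unfold hpen
    rw [div_sub_div_same, abs_div, abs_of_pos hlam, div_le_iff₀ hlam, hxy]
    have hw : 0 ≤ lam * (x - y) := by nlinarith
    have h5 : Real.exp (lam*x) * (lam*(x-y)) ≤ Real.exp (lam*b) * (lam*(x-y)) :=
      mul_le_mul_of_nonneg_right h1 hw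
    have h6 : lam * (x - y) ≤ Real.exp (lam*b) * (lam*(x-y)) := le_mul_of_one_le_left hw h4
    rw [abs_le]
    constructor
    · nlinarith
    · nlinarith
  intro x y hx hy
  rcases le_total y x with h | h
  · exact key x y hx hy h
  · rw [abs_sub_comm, abs_sub_comm x y]; exact key y x hy hx h

/-- The composite `H_m = h_λ ∘ φ_m` and its Lipschitz property. -/
lemma Hm_lip {lam : ℝ} (hlam : 0 < lam) (m : ℕ) (x y : ℝ) :
    |hpen lam (phim m x) - hpen lam (phim m y)| ≤ Real.exp (lam * (m + 2)) * |x - y| := by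
  have h := hpen_lip hlam (b := (m : ℝ) + 2) (by positivity) (phim_le m x) (phim_le m y)
  refine h.trans ?_
  exact mul_le_mul_of_nonneg_left (phim_lip m x y) (Real.exp_pos _).le

lemma hpen_zero {lam : ℝ} (hlam : 0 < lam) : hpen lam 0 = 0 := by
  unfold hpen; simp

lemma Hm_bound {lam : ℝ} (hlam : 0 < lam) (m : ℕ) (x : ℝ) :
    |hpen lam (phim m x)| ≤ Real.exp (lam * (m + 2)) * |x| := by
  have := Hm_lip hlam m x 0
  rw [phim_zero, hpen_zero hlam] at this
  simpa using this

lemma rhom_eq (m : ℕ) (x : ℝ) :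
    rhom m x = max 0 (min 1 (min (x + m + 1) ((m : ℝ) + 1 - x))) := by
  unfold rhom
  have hm0 : (0:ℝ) ≤ (m:ℝ) := Nat.cast_nonneg m
  split_ifs with h1 h2 h3
  · rw [min_eq_left (show x + (m:ℝ) + 1 ≤ (m:ℝ) + 1 - x by linarith [h1.2]),
      min_eq_right (show x + (m:ℝ) + 1 ≤ 1 by linarith [h1.2]),
      max_eq_right (show (0:ℝ) ≤ x + (m:ℝ) + 1 by linarith [h1.1])]
  · rw [min_eq_left (le_min (show (1:ℝ) ≤ x + (m:ℝ) + 1 by linarith [h2.1])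
      (show (1:ℝ) ≤ (m:ℝ) + 1 - x by linarith [h2.2])), max_eq_right zero_le_one]
  · rw [min_eq_right (show (m:ℝ) + 1 - x ≤ x + (m:ℝ) + 1 by linarith [h3.1]),
      min_eq_right (show (m:ℝ) + 1 - x ≤ 1 by linarith [h3.1]),
      max_eq_right (show (0:ℝ) ≤ (m:ℝ) + 1 - x by linarith [h3.2])]
  · have : x + (m:ℝ) + 1 ≤ 0 ∨ (m:ℝ) + 1 - x ≤ 0 := by
      by_contra hc
      push_neg at hc
      rcases lt_or_ge x (-(m:ℝ)) with h | h
      · exact h1 ⟨by linarith [hc.1], h⟩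
      rcases le_or_gt x (m:ℝ) with h' | h'
      · exact h2 ⟨h, h'⟩
      · exact h3 ⟨h', by linarith [hc.2]⟩
    rcases this with h | h
    · rw [max_eq_left ((min_le_right _ _).trans ((min_le_left _ _).trans h))]
    · rw [max_eq_left ((min_le_right _ _).trans ((min_le_right _ _).trans h))]

lemma rhom_zero_left {m : ℕ} {z : ℝ} (h : z ≤ -((m:ℝ)+1)) : rhom m z = 0 := by
  rw [rhom_eq]
  exact max_eq_left ((min_le_right _ _).trans ((min_le_left _ _).trans (by linarith)))

lemma rhom_zero_right {m : ℕ} {z : ℝ} (h : (m:ℝ)+1 ≤ z) : rhom m z = 0 := by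
  rw [rhom_eq]
  exact max_eq_left ((min_le_right _ _).trans ((min_le_right _ _).trans (by linarith)))
lemma rhom_lip (m : ℕ) (x y : ℝ) : |rhom m x - rhom m y| ≤ |x - y| := by
  rw [rhom_eq, rhom_eq]
  refine (abs_max_sub_max_le_max _ _ _ _).trans (max_le (by simpa using abs_nonneg (x-y)) ?_)
  refine (abs_min_sub_min_le_max _ _ _ _).trans (max_le (by simpa using abs_nonneg (x-y)) ?_)
  refine (abs_min_sub_min_le_max _ _ _ _).trans (max_le (le_of_eq (by ring_nf)) (le_of_eq ?_))
  rw [show (m:ℝ) + 1 - x - ((m:ℝ) + 1 - y) = -(x - y) by ring, abs_neg]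

lemma rhom_nonneg (m : ℕ) (x : ℝ) : 0 ≤ rhom m x := by rw [rhom_eq]; exact le_max_left _ _

lemma rhom_le_one (m : ℕ) (x : ℝ) : rhom m x ≤ 1 :=
  (rhom_eq m x) ▸ max_le zero_le_one (min_le_left _ _)

def clampm (m : ℕ) (z : ℝ) : ℝ := min ((m:ℝ)+1) (max (-((m:ℝ)+1)) z)

lemma clampm_lip (m : ℕ) (x y : ℝ) : |clampm m x - clampm m y| ≤ |x - y| := by
  unfold clampm
  refine (abs_min_sub_min_le_max _ _ _ _).trans (max_le (by simpa using abs_nonneg (x-y)) ?_)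
  refine (abs_max_sub_max_le_max _ _ _ _).trans (max_le (by simpa using abs_nonneg (x-y)) le_rfl)

lemma clampm_mem (m : ℕ) (z : ℝ) : -((m:ℝ)+1) ≤ clampm m z ∧ clampm m z ≤ (m:ℝ)+1 := by
  unfold clampm
  constructor
  · exact le_min (by linarith [Nat.cast_nonneg (α := ℝ) m]) (le_max_left _ _)
  · exact min_le_left _ _

lemma mul_rhom_clampm (m : ℕ) (f : ℝ → ℝ) (z : ℝ) :
    f z * rhom m z = f (clampm m z) * rhom m (clampm m z) := by
  have hm0 : (0:ℝ) ≤ (m:ℝ) := Nat.cast_nonneg m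
  rcases le_total z (-((m:ℝ)+1)) with h | h
  · have hc : clampm m z = -((m:ℝ)+1) := by
      unfold clampm; rw [max_eq_left h, min_eq_right (by linarith)]
    rw [rhom_zero_left h, hc, rhom_zero_left le_rfl]; ring
  rcases le_total z ((m:ℝ)+1) with h' | h'
  · have : clampm m z = z := by
      unfold clampm; rw [max_eq_right h, min_eq_right h']
    rw [this]
  · have hc : clampm m z = (m:ℝ)+1 := by
      unfold clampm; rw [max_eq_right h, min_eq_left h']
    rw [rhom_zero_right h', hc, rhom_zero_right le_rfl]; ring

/-- Lipschitz bound for the quadratic term of `f1m`. -/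
lemma quad_rhom_diff (m : ℕ) {Mb : ℝ} (c p z z' : ℝ) (hp : |p| ≤ Mb) :
    |(p - (z + c))^2 * rhom m z - (p - (z' + c))^2 * rhom m z'|
      ≤ ((Mb + (m+1) + |c|)^2 + 2*(Mb + (m+1) + |c|)) * |z - z'| := by
  set Q := Mb + ((m:ℝ)+1) + |c| with hQ
  rw [mul_rhom_clampm m (fun z => (p - (z + c))^2) z,
    mul_rhom_clampm m (fun z => (p - (z + c))^2) z']
  set a := clampm m z
  set b := clampm m z'
  have hab : |a - b| ≤ |z - z'| := clampm_lip m z z'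
  have ha := clampm_mem m z
  have hb := clampm_mem m z'
  have hMb : 0 ≤ Mb := (abs_nonneg p).trans hp
  have hpa : |p - (a + c)| ≤ Q := by
    rw [hQ]
    calc |p - (a + c)| ≤ |p| + (|a| + |c|) := by
          refine (abs_sub _ _).trans ?_; gcongr; exact abs_add_le a c
      _ ≤ Mb + (((m:ℝ)+1) + |c|) := by
          gcongr
          rw [abs_le]; exact ⟨ha.1, ha.2⟩
      _ = Q := by rw [hQ]; ring
  have hpb : |p - (b + c)| ≤ Q := by
    rw [hQ]
    calc |p - (b + c)| ≤ |p| + (|b| + |c|) := by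
          refine (abs_sub _ _).trans ?_; gcongr; exact abs_add_le b c
      _ ≤ Mb + (((m:ℝ)+1) + |c|) := by
          gcongr
          rw [abs_le]; exact ⟨hb.1, hb.2⟩
      _ = Q := by rw [hQ]; ring
  have hQ0 : 0 ≤ Q := (abs_nonneg _).trans hpa
  have key : (p - (a + c))^2 * rhom m a - (p - (b + c))^2 * rhom m b
      = (p - (a+c))^2 * (rhom m a - rhom m b) + ((p-(a+c))^2 - (p-(b+c))^2) * rhom m b := by
    ring
  have hrab : |rhom m a - rhom m b| ≤ |z - z'| := (rhom_lip m a b).trans hab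
  have habz : |a - b| ≤ |z - z'| := hab
  have e1 : |(p - (a+c))^2 * (rhom m a - rhom m b)| ≤ Q^2 * |z - z'| := by
    rw [abs_mul, abs_of_nonneg (sq_nonneg _)]
    have h1 : (p - (a+c))^2 ≤ Q^2 := by
      rw [← sq_abs]; exact pow_le_pow_left₀ (abs_nonneg _) hpa 2
    exact mul_le_mul h1 hrab (abs_nonneg _) (by positivity)
  have e2 : |((p-(a+c))^2 - (p-(b+c))^2) * rhom m b| ≤ 2*Q * |z - z'| := by
    rw [abs_mul]
    have h2 : |(p-(a+c))^2 - (p-(b+c))^2| ≤ 2*Q * |z - z'| := by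
      have hf : (p-(a+c))^2 - (p-(b+c))^2 = ((p-(a+c)) + (p-(b+c))) * (b - a) := by ring
      rw [hf, abs_mul]
      have h3 : |(p-(a+c)) + (p-(b+c))| ≤ 2*Q := by
        refine (abs_add_le _ _).trans (by linarith)
      have h4 : |b - a| ≤ |z - z'| := by rwa [abs_sub_comm]
      exact mul_le_mul h3 h4 (abs_nonneg _) (by positivity)
    calc |(p-(a+c))^2 - (p-(b+c))^2| * |rhom m b| ≤ |(p-(a+c))^2 - (p-(b+c))^2| * 1 := by
          gcongr
          rw [abs_of_nonneg (rhom_nonneg m b)]; exact rhom_le_one m b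
      _ ≤ 2*Q * |z - z'| := by rw [mul_one]; exact h2
  rw [key]
  refine (abs_add_le _ _).trans ?_
  have : ((Mb + ((m:ℕ):ℝ) + 1 + |c|)^2 + 2*(Mb + (m:ℝ) + 1 + |c|)) = Q^2 + 2*Q := by
    rw [hQ]; ring
  calc |(p - (a+c))^2 * (rhom m a - rhom m b)| + |((p-(a+c))^2 - (p-(b+c))^2) * rhom m b|
      ≤ Q^2 * |z - z'| + 2*Q * |z - z'| := add_le_add e1 e2
    _ = (Q^2 + 2*Q) * |z - z'| := by ring
    _ ≤ ((Mb + ((m:ℝ)+1) + |c|)^2 + 2*(Mb + ((m:ℝ)+1) + |c|)) * |z - z'| := by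
        rw [hQ]

lemma real_le_add_eps {a b : ℝ} (h : ∀ ε : ℝ, 0 < ε → a ≤ b + ε) : a ≤ b := by
  by_contra hc
  push_neg at hc
  have := h ((a - b)/2) (by linarith)
  linarith

/-- inf-difference bound. -/
lemma abs_ciInf_sub_ciInf {ι : Type*} [Nonempty ι] {A B : ι → ℝ} {c : ℝ}
    (hA : BddBelow (range A)) (hB : BddBelow (range B))
    (h : ∀ i, |A i - B i| ≤ c) : |iInf A - iInf B| ≤ c := by
  rw [abs_le]
  constructor
  · have : iInf B - c ≤ iInf A := by
      refine le_ciInf fun i => ?_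
      have h1 : iInf B ≤ B i := ciInf_le hB i
      have h2 := (abs_le.1 (h i)).1
      linarith
    linarith
  · have : iInf A - c ≤ iInf B := by
      refine le_ciInf fun i => ?_
      have h1 : iInf A ≤ A i := ciInf_le hA i
      have h2 := (abs_le.1 (h i)).2
      linarith
    linarith

lemma abs_ciInf_le {ι : Type*} [Nonempty ι] {A : ι → ℝ} {c : ℝ}
    (h : ∀ i, |A i| ≤ c) : |iInf A| ≤ c := by
  have hbdd : BddBelow (range A) := by
    refine ⟨-c, fun x ⟨i, hi⟩ => ?_⟩
    rw [← hi]; exact (abs_le.1 (h i)).1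
  rw [abs_le]
  refine ⟨le_ciInf fun i => (abs_le.1 (h i)).1, ?_⟩
  exact (ciInf_le hbdd (Classical.arbitrary ι)).trans (abs_le.1 (h (Classical.arbitrary ι))).2

/-- Infimum over a dense sequence equals infimum, for continuous bounded-below functions. -/
lemma ciInf_eq_ciInf_dense {X : Type*} [TopologicalSpace X] [Nonempty X]
    (d : ℕ → X) (hd : DenseRange d) {A : X → ℝ} (hA : Continuous A)
    (hbd : BddBelow (range A)) : (⨅ x, A x) = ⨅ n, A (d n) := by
  have hbd' : BddBelow (range fun n => A (d n)) := by
    obtain ⟨r, hr⟩ := hbd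
    exact ⟨r, fun x ⟨n, hn⟩ => hr ⟨d n, hn⟩⟩
  refine le_antisymm (le_ciInf fun n => ciInf_le hbd (d n)) ?_
  refine le_ciInf fun x => real_le_add_eps fun ε hε => ?_
  have hcont : ∀ᶠ y in nhds x, A y < A x + ε :=
    (hA.continuousAt (x := x)).eventually_lt continuousAt_const (by linarith)
  obtain ⟨U, hU, hUo, hxU⟩ := eventually_nhds_iff.1 hcont
  obtain ⟨n, hn⟩ : ∃ n, d n ∈ U := hd.exists_mem_open hUo ⟨x, hxU⟩
  exact (ciInf_le hbd' n).trans (hU _ hn).le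

/-- Cauchy–Schwarz: `∫⁻ |w| ∂ρ ≤ ofReal (√(ρ univ) * √(∫ w² ∂ν))` when `ρ ≤ ν` finite. -/
lemma lintegral_abs_le_sqrt {ρ ν : Measure ℝ} (hρν : ρ ≤ ν) (hfin : ρ univ ≠ ⊤)
    {w : ℝ → ℝ} (hw : Measurable w) (hw2 : Integrable (fun e => w e ^ 2) ν) :
    ∫⁻ e, ENNReal.ofReal |w e| ∂ρ
      ≤ ENNReal.ofReal (Real.sqrt ((ρ univ).toReal) * Real.sqrt (∫ e, w e ^ 2 ∂ν)) := by
  have hconj : Real.HolderConjugate 2 2 := Real.HolderConjugate.two_two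
  have hH := ENNReal.lintegral_mul_le_Lp_mul_Lq ρ hconj
    (f := fun e => ENNReal.ofReal |w e|) (g := fun _ => 1)
    (hw.abs.ennreal_ofReal.aemeasurable) aemeasurable_const
  simp only [Pi.mul_apply, mul_one, ENNReal.one_rpow, lintegral_const, one_mul] at hH
  refine hH.trans ?_
  have h1 : ∀ e, ENNReal.ofReal |w e| ^ (2:ℝ) = ENNReal.ofReal (w e ^ 2) := by
    intro e
    rw [ENNReal.ofReal_rpow_of_nonneg (abs_nonneg (w e)) (by norm_num : (0:ℝ) ≤ 2)]
    congr 1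
    rw [show ((2:ℝ)) = ((2:ℕ):ℝ) by norm_num, Real.rpow_natCast, sq_abs]
  simp only [h1]
  have h2 : ∫⁻ e, ENNReal.ofReal (w e ^ 2) ∂ρ ≤ ENNReal.ofReal (∫ e, w e ^ 2 ∂ν) := by
    rw [ofReal_integral_eq_lintegral_ofReal hw2 (Filter.Eventually.of_forall fun e => sq_nonneg _)]
    exact lintegral_mono' hρν le_rfl
  calc (∫⁻ e, ENNReal.ofReal (w e ^ 2) ∂ρ) ^ (1/(2:ℝ)) * (ρ univ) ^ (1/(2:ℝ))
      ≤ (ENNReal.ofReal (∫ e, w e ^ 2 ∂ν)) ^ (1/(2:ℝ)) * (ENNReal.ofReal ((ρ univ).toReal)) ^ (1/(2:ℝ)) := by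
        gcongr
        exact (ENNReal.ofReal_toReal hfin).ge
    _ = ENNReal.ofReal (Real.sqrt ((ρ univ).toReal) * Real.sqrt (∫ e, w e ^ 2 ∂ν)) := by
        rw [ENNReal.ofReal_rpow_of_nonneg (by positivity) (by norm_num),
          ENNReal.ofReal_rpow_of_nonneg ENNReal.toReal_nonneg (by norm_num),
          ← ENNReal.ofReal_mul (by positivity)]
        rw [← Real.sqrt_eq_rpow, ← Real.sqrt_eq_rpow, mul_comm]

/-- Real-valued corollary, with integrability of `|w|` against `ρ` included. -/
lemma integral_abs_le_sqrt {ρ ν : Measure ℝ} (hρν : ρ ≤ ν) (hfin : ρ univ ≠ ⊤)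
    {w : ℝ → ℝ} (hw : Measurable w) (hw2 : Integrable (fun e => w e ^ 2) ν) :
    Integrable w ρ ∧
    ∫ e, |w e| ∂ρ ≤ Real.sqrt ((ρ univ).toReal) * Real.sqrt (∫ e, w e ^ 2 ∂ν) := by
  have hb := lintegral_abs_le_sqrt hρν hfin hw hw2
  have hint : Integrable w ρ := by
    refine ⟨hw.aestronglyMeasurable, ?_⟩
    rw [hasFiniteIntegral_iff_norm]
    simp only [Real.norm_eq_abs]
    exact hb.trans_lt ENNReal.ofReal_lt_top
  refine ⟨hint, ?_⟩
  rw [integral_eq_lintegral_of_nonneg_ae (Filter.Eventually.of_forall fun e => abs_nonneg _)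
    hw.abs.aestronglyMeasurable]
  calc (∫⁻ e, ENNReal.ofReal |w e| ∂ρ).toReal
      ≤ (ENNReal.ofReal (Real.sqrt ((ρ univ).toReal) * Real.sqrt (∫ e, w e ^ 2 ∂ν))).toReal :=
        ENNReal.toReal_mono ENNReal.ofReal_ne_top hb
    _ = _ := ENNReal.toReal_ofReal (by positivity)

lemma integrable_of_ofReal_lt_top {ρ : Measure ℝ} {f : ℝ → ℝ}
    (hf : AEStronglyMeasurable f ρ) (h : ∫⁻ x, ENNReal.ofReal |f x| ∂ρ < ⊤) :
    Integrable f ρ := by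
  refine ⟨hf, ?_⟩
  rw [hasFiniteIntegral_iff_norm]
  simpa using h

section
variable {ν μ : Measure ℝ} {γ : ℝ → ℝ} {K : ℝ → Measure ℝ}

lemma nuT_ne_top (hν2 : (∫⁻ e, ENNReal.ofReal (min 1 (e ^ 2)) ∂ν) < ⊤)
    {m : ℕ} (hm : 1 ≤ m) :
    ν (Set.Icc (-(1 / (m : ℝ))) (1 / (m : ℝ)))ᶜ ≠ ⊤ := by
  set T := (Set.Icc (-(1 / (m : ℝ))) (1 / (m : ℝ)))ᶜ with hT
  have hm0 : (0:ℝ) < (m:ℝ) := by exact_mod_cast Nat.lt_of_lt_of_le Nat.zero_lt_one hm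
  have hm1 : 1 / (m:ℝ) ≤ 1 := by
    rw [div_le_one hm0]; exact_mod_cast hm
  set c : ℝ≥0∞ := ENNReal.ofReal ((1/(m:ℝ))^2) with hc
  have hc0 : c ≠ 0 := by
    rw [hc, ne_eq, ENNReal.ofReal_eq_zero, not_le]; positivity
  have hbound : ∀ e ∈ T, c ≤ ENNReal.ofReal (min 1 (e ^ 2)) := by
    intro e he
    rw [hc]
    apply ENNReal.ofReal_le_ofReal
    have h1m : (0:ℝ) < 1/(m:ℝ) := by positivity
    rw [hT, mem_compl_iff, mem_Icc, not_and_or] at he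
    have he2 : (1/(m:ℝ))^2 ≤ e^2 := by
      rcases he with h | h
      · push_neg at h; nlinarith [sq_nonneg (e + 1/(m:ℝ))]
      · push_neg at h; nlinarith [sq_nonneg (e - 1/(m:ℝ))]
    exact le_min (by nlinarith) he2
  have hchain : c * ν T ≤ ∫⁻ e, ENNReal.ofReal (min 1 (e ^ 2)) ∂ν := by
    rw [← setLIntegral_const T c]
    refine (setLIntegral_mono (by measurability) hbound).trans (setLIntegral_le_lintegral _ _)
  intro htop
  rw [htop, ENNReal.mul_top hc0] at hchain
  exact (hchain.trans_lt hν2).ne rfl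

lemma disint (hγmeas : Measurable γ) (hKmeas : Measurable K)
    (hdis : ∀ B : Set ℝ, MeasurableSet B →
      ν (B ∩ {e | γ e ≠ 0}) = ∫⁻ g in ({0}ᶜ : Set ℝ), K g B ∂μ)
    {f : ℝ → ℝ≥0∞} (hf : Measurable f) :
    ∫⁻ e, f e ∂(ν.restrict {e | γ e ≠ 0})
      = ∫⁻ g in ({0}ᶜ : Set ℝ), ∫⁻ e, f e ∂(K g) ∂μ := by
  have hbind : (μ.restrict ({0}ᶜ : Set ℝ)).bind K = ν.restrict {e | γ e ≠ 0} := by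
    refine Measure.ext fun B hB => ?_
    rw [Measure.bind_apply hB hKmeas.aemeasurable, Measure.restrict_apply hB, ← hdis B hB]
  rw [← hbind, Measure.lintegral_bind hKmeas.aemeasurable hf.aemeasurable]
end

lemma Hm_continuous (lam : ℝ) (m : ℕ) : Continuous fun x => hpen lam (phim m x) := by
  have h0 : Continuous phi0 := by
    have : (phi0 : ℝ → ℝ) = fun x => min x (Real.arctan x) := funext phi0_eq
    rw [this]
    exact continuous_id.min Real.continuous_arctan
  have h1 : Continuous (phim m) := by
    unfold phim
    exact (h0.comp (continuous_id.sub continuous_const)).add continuous_const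
  have h2 : Continuous (hpen lam) := by
    unfold hpen
    exact (((Real.continuous_exp.comp (continuous_const.mul continuous_id)).sub
      (continuous_const.mul continuous_id)).sub continuous_const).div_const lam
  exact h2.comp h1

lemma ofReal_indicator' {T : Set ℝ} (h : ℝ → ℝ) (e : ℝ) :
    ENNReal.ofReal (T.indicator h e) = T.indicator (fun e => ENNReal.ofReal (h e)) e := by
  by_cases he : e ∈ T <;> simp [he]

lemma lint_T_fin {ν : Measure ℝ} {T : Set ℝ} (hTmeas : MeasurableSet T) (hνT : ν T ≠ ⊤)
    {h : ℝ → ℝ} {q : ℝ → ℝ} (hq : Integrable q ν) (c : ℝ)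
    (hbb : ∀ e, |h e| ≤ |q e| + c) :
    ∫⁻ e, ENNReal.ofReal (T.indicator h e) ∂ν < ⊤ := by
  have step1 : ∫⁻ e, ENNReal.ofReal (T.indicator h e) ∂ν
      = ∫⁻ e in T, ENNReal.ofReal (h e) ∂ν := by
    simp_rw [ofReal_indicator']
    exact lintegral_indicator hTmeas _
  rw [step1]
  have step2 : ∫⁻ e in T, ENNReal.ofReal (h e) ∂ν
      ≤ ∫⁻ e in T, (ENNReal.ofReal |q e| + ENNReal.ofReal c) ∂ν := by
    refine lintegral_mono fun e => ?_
    exact le_trans (ENNReal.ofReal_le_ofReal ((le_abs_self _).trans (hbb e)))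
      ENNReal.ofReal_add_le
  refine lt_of_le_of_lt step2 ?_
  rw [lintegral_add_right _ measurable_const, setLIntegral_const]
  have h3 : ∫⁻ e in T, ENNReal.ofReal |q e| ∂ν ≤ ∫⁻ e, ENNReal.ofReal |q e| ∂ν :=
    setLIntegral_le_lintegral _ _
  have h4 : ∫⁻ e, ENNReal.ofReal |q e| ∂ν < ⊤ := by
    rw [← ofReal_integral_eq_lintegral_ofReal hq.abs
      (Filter.Eventually.of_forall fun e => abs_nonneg _)]
    exact ENNReal.ofReal_lt_top
  exact ENNReal.add_lt_top.2 ⟨h3.trans_lt h4,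
    ENNReal.mul_lt_top ENNReal.ofReal_lt_top (lt_top_iff_ne_top.2 hνT)⟩

set_option maxHeartbeats 2000000 in
/-- **Lipschitz continuity of the approximating drivers**: for every `m ≥ 1` there is a
constant `L_m > 0` with
`|f_m(z,u) − f_m(z',u')| ≤ L_m (|z − z'| + (∫ (u − u')² dν)^{1/2})`
for all `z, z' ∈ ℝ` and all Borel square-`ν`-integrable `u, u'`. -/
theorem fm_lipschitz
    (ν : Measure ℝ) [SigmaFinite ν]
    (hν0 : ν {0} = 0)
    (hν2 : (∫⁻ e, ENNReal.ofReal (min 1 (e ^ 2)) ∂ν) < ⊤)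
    (η γ : ℝ → ℝ) (hηmeas : Measurable η) (hγmeas : Measurable γ)
    (C₀ : ℝ) (hC₀ : 0 < C₀)
    (hηb : ∀ e, |η e| ≤ C₀ * min 1 |e|)
    (hγb : ∀ e, |γ e| ≤ C₀ * min 1 |e|)
    (hηint : Integrable η ν)
    (μ : Measure ℝ)
    (hμ : ∀ B : Set ℝ, MeasurableSet B → μ B = ν (γ ⁻¹' (B \ {0})))
    (K : ℝ → Measure ℝ) (hKmeas : Measurable K)
    (hKprob : ∀ᵐ g ∂μ.restrict ({0}ᶜ : Set ℝ),
      K g Set.univ = 1 ∧ K g {e | γ e = g} = 1)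
    (hdis : ∀ B : Set ℝ, MeasurableSet B →
      ν (B ∩ {e | γ e ≠ 0}) = ∫⁻ g in ({0}ᶜ : Set ℝ), K g B ∂μ)
    (lam pil pib : ℝ) (hlam : 0 < lam) (hpil : 0 < pil) (hpib : 0 < pib)
    (Cke : ℝ)
    (m : ℕ) (hm : 1 ≤ m) :
    ∃ L : ℝ, 0 < L ∧
      ∀ (z z' : ℝ) (u u' : ℝ → ℝ), Measurable u → Measurable u' →
        Integrable (fun e => (u e) ^ 2) ν → Integrable (fun e => (u' e) ^ 2) ν →
        |fm ν μ η γ K lam Cke pil pib m z u - fm ν μ η γ K lam Cke pil pib m z' u'|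
          ≤ L * (|z - z'| + Real.sqrt (∫ e, (u e - u' e) ^ 2 ∂ν)) := by
  classical
  -- Basic setup
  have hmR : (1:ℝ) ≤ (m:ℝ) := by exact_mod_cast hm
  set T : Set ℝ := (Set.Icc (-(1 / (m : ℝ))) (1 / (m : ℝ)))ᶜ with hTdef
  have hTmeas : MeasurableSet T := measurableSet_Icc.compl
  have hνT : ν T ≠ ⊤ := nuT_ne_top hν2 hm
  have hTiff : ∀ e : ℝ, (1 / (m:ℝ) < |e|) ↔ e ∈ T := by
    intro e
    rw [hTdef, mem_compl_iff, mem_Icc, not_and_or]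
    constructor
    · intro h
      rcases lt_abs.1 h with h | h
      · right; push_neg; exact h
      · left; push_neg; linarith
    · intro h
      rcases h with h | h
      · push_neg at h; exact lt_abs.2 (Or.inr (by linarith))
      · push_neg at h; exact lt_abs.2 (Or.inl h)
  set Mb : ℝ := max pil pib with hMbdef
  have hMb0 : 0 < Mb := lt_of_lt_of_le hpil (le_max_left _ _)
  haveI hne : Nonempty ↥(Set.Icc (-pil) pib) :=
    ⟨⟨0, by rw [Set.mem_Icc]; constructor <;> linarith⟩⟩
  have hpmem : ∀ p : ↥(Set.Icc (-pil) pib), |(p:ℝ)| ≤ Mb := by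
    intro p
    obtain ⟨h1, h2⟩ := Set.mem_Icc.1 p.2
    rw [abs_le]
    exact ⟨by refine le_trans ?_ h1; rw [neg_le_neg_iff]; exact le_max_left _ _,
      h2.trans (le_max_right _ _)⟩
  set CL : ℝ := Real.exp (lam * (m + 2)) with hCLdef
  have hCL0 : 0 < CL := Real.exp_pos _
  have hCb : ∀ e, |η e| ≤ C₀ := fun e => (hηb e).trans
    (by nlinarith [min_le_left (1:ℝ) |e|])
  set c2 : ℝ := Real.sqrt ((ν T).toReal) with hc2def
  have hc20 : 0 ≤ c2 := Real.sqrt_nonneg _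
  set Q : ℝ := Mb + ((m:ℝ)+1) + |Cke/lam| with hQdef
  have hQ0 : 0 < Q := by positivity
  refine ⟨lam/2*(Q^2+2*Q) + |Cke| + 2*CL*(c2+1) + 1, by positivity, ?_⟩
  intro z z' u u' hu hu' hu2 hu'2
  set W : ℝ := Real.sqrt (∫ e, (u e - u' e) ^ 2 ∂ν) with hWdef
  have hW0 : 0 ≤ W := Real.sqrt_nonneg _
  have hduu' : Integrable (fun e => (u e - u' e) ^ 2) ν := by
    refine ((hu2.const_mul 2).add (hu'2.const_mul 2)).mono'
      (((hu.sub hu').pow_const 2).aestronglyMeasurable) ?_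
    refine Filter.Eventually.of_forall fun e => ?_
    rw [Real.norm_eq_abs, abs_of_nonneg (sq_nonneg _), Pi.add_apply]
    nlinarith [sq_nonneg (u e + u' e)]
  -- the measure for the f1-part
  set Sγ0 : Set ℝ := {e : ℝ | γ e = 0} with hSγ0def
  have hSγ0 : MeasurableSet Sγ0 := hγmeas (measurableSet_singleton 0)
  set ρ₀ : Measure ℝ := (numeas ν m).restrict Sγ0 with hρ₀def
  have hρ₀ν : ρ₀ ≤ ν := le_trans Measure.restrict_le_self Measure.restrict_le_self
  have hρ₀fin : ρ₀ univ ≠ ⊤ := by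
    refine ne_top_of_le_ne_top hνT ?_
    rw [hρ₀def, Measure.restrict_apply MeasurableSet.univ, Set.univ_inter]
    unfold numeas
    rw [Measure.restrict_apply hSγ0]
    exact measure_mono (Set.inter_subset_right)
  haveI : IsFiniteMeasure ρ₀ := ⟨lt_top_iff_ne_top.2 hρ₀fin⟩
  have hρ₀c2 : Real.sqrt ((ρ₀ univ).toReal) ≤ c2 := by
    refine Real.sqrt_le_sqrt (ENNReal.toReal_mono hνT ?_)
    refine le_trans ?_ (le_refl (ν T))
    rw [hρ₀def, Measure.restrict_apply MeasurableSet.univ, Set.univ_inter]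
    unfold numeas
    rw [Measure.restrict_apply hSγ0]
    exact measure_mono (Set.inter_subset_right)
  -- Cauchy-Schwarz facts on ρ₀
  obtain ⟨hIρu, _⟩ := integral_abs_le_sqrt hρ₀ν hρ₀fin hu hu2
  obtain ⟨hIρu', _⟩ := integral_abs_le_sqrt hρ₀ν hρ₀fin hu' hu'2
  obtain ⟨hIρd, hCSd⟩ := integral_abs_le_sqrt hρ₀ν hρ₀fin (hu.sub hu') hduu'
  have hCSd' : ∫ e, |u e - u' e| ∂ρ₀ ≤ c2 * W := by
    refine hCSd.trans ?_
    exact mul_le_mul_of_nonneg_right hρ₀c2 hW0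
  -- pointwise properties of the integrands in f1m
  have hHmeas : ∀ (v : ℝ → ℝ), Measurable v → ∀ p : ℝ,
      Measurable (fun e => hpen lam (phim m (v e - p * η e))) := by
    intro v hv p
    exact (Hm_continuous lam m).measurable.comp (hv.sub (measurable_const.mul hηmeas))
  have hHbd : ∀ (v : ℝ → ℝ) (p : ℝ), |p| ≤ Mb → ∀ e,
      |hpen lam (phim m (v e - p * η e))| ≤ CL * (|v e| + Mb * C₀) := by
    intro v p hp e
    refine (Hm_bound hlam m _).trans ?_
    refine mul_le_mul_of_nonneg_left ?_ hCL0.le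
    refine (abs_sub _ _).trans ?_
    have : |p * η e| ≤ Mb * C₀ := by
      rw [abs_mul]
      exact mul_le_mul hp (hCb e) (abs_nonneg _) hMb0.le
    linarith
  have hIH : ∀ (v : ℝ → ℝ), Measurable v → Integrable v ρ₀ → ∀ p : ℝ, |p| ≤ Mb →
      Integrable (fun e => hpen lam (phim m (v e - p * η e))) ρ₀ := by
    intro v hv hvint p hp
    refine Integrable.mono' (g := fun e => CL * (|v e| + Mb * C₀))
      (((hvint.abs.add (integrable_const (Mb * C₀))).const_mul CL))
      ((hHmeas v hv p).aestronglyMeasurable) ?_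
    refine Filter.Eventually.of_forall fun e => ?_
    rw [Real.norm_eq_abs]
    refine (hHbd v p hp e).trans (le_of_eq ?_)
    ring
  -- f1 part
  have claim1 : |(⨅ p : ↥(Set.Icc (-pil) pib), f1m ν η γ lam Cke m z u p)
      - ⨅ p : ↥(Set.Icc (-pil) pib), f1m ν η γ lam Cke m z' u' p|
      ≤ lam/2*(Q^2+2*Q) * |z - z'| + CL * (c2 * W) := by
    have hbdd : ∀ (zz : ℝ) (v : ℝ → ℝ), Measurable v → Integrable v ρ₀ →
        BddBelow (range fun p : ↥(Set.Icc (-pil) pib) => f1m ν η γ lam Cke m zz v p) := by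
      intro zz v hv hvint
      refine ⟨-(CL * ∫ e, (|v e| + Mb*C₀) ∂ρ₀) - Mb * |∫ e in {e : ℝ | γ e = 0}, η e ∂ν|, ?_⟩
      rintro x ⟨p, rfl⟩
      dsimp only
      unfold f1m
      have h1 : 0 ≤ lam / 2 * ((p:ℝ) - (zz + Cke / lam)) ^ 2 * rhom m zz :=
        mul_nonneg (by positivity) (rhom_nonneg m zz)
      have h2 : |∫ e in {e : ℝ | γ e = 0}, hpen lam (phim m (v e - ↑p * η e)) ∂(numeas ν m)|
          ≤ CL * ∫ e, (|v e| + Mb*C₀) ∂ρ₀ := by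
        rw [show (∫ e in {e : ℝ | γ e = 0}, hpen lam (phim m (v e - ↑p * η e)) ∂(numeas ν m))
          = ∫ e, hpen lam (phim m (v e - ↑p * η e)) ∂ρ₀ from rfl]
        calc |∫ e, hpen lam (phim m (v e - ↑p * η e)) ∂ρ₀|
            = ‖∫ e, hpen lam (phim m (v e - ↑p * η e)) ∂ρ₀‖ := (Real.norm_eq_abs _).symm
          _ ≤ ∫ e, ‖hpen lam (phim m (v e - ↑p * η e))‖ ∂ρ₀ := norm_integral_le_integral_norm _
          _ ≤ ∫ e, CL * (|v e| + Mb*C₀) ∂ρ₀ := by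
              refine integral_mono (hIH v hv hvint p (hpmem p)).norm
                ((hvint.abs.add (integrable_const (Mb * C₀))).const_mul CL) fun e => ?_
              rw [Real.norm_eq_abs]
              exact hHbd v p (hpmem p) e
          _ = CL * ∫ e, (|v e| + Mb*C₀) ∂ρ₀ := integral_const_mul CL _
      have h3 : |(p:ℝ) * ∫ e in {e : ℝ | γ e = 0}, η e ∂ν|
          ≤ Mb * |∫ e in {e : ℝ | γ e = 0}, η e ∂ν| := by
        rw [abs_mul]
        exact mul_le_mul_of_nonneg_right (hpmem p) (abs_nonneg _)
      have h2' := (abs_le.1 h2).1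
      have h4 := (le_abs_self ((p:ℝ) * ∫ e in {e : ℝ | γ e = 0}, η e ∂ν)).trans h3
      linarith
    have hpt : ∀ p : ↥(Set.Icc (-pil) pib),
        |f1m ν η γ lam Cke m z u p - f1m ν η γ lam Cke m z' u' p|
        ≤ lam/2*(Q^2+2*Q) * |z - z'| + CL * (c2 * W) := by
      intro p
      have hp := hpmem p
      have hIu := hIH u hu hIρu p hp
      have hIu' := hIH u' hu' hIρu' p hp
      unfold f1m
      rw [show (∫ e in {e : ℝ | γ e = 0}, hpen lam (phim m (u e - ↑p * η e)) ∂(numeas ν m))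
          = ∫ e, hpen lam (phim m (u e - ↑p * η e)) ∂ρ₀ from rfl,
        show (∫ e in {e : ℝ | γ e = 0}, hpen lam (phim m (u' e - ↑p * η e)) ∂(numeas ν m))
          = ∫ e, hpen lam (phim m (u' e - ↑p * η e)) ∂ρ₀ from rfl]
      have hid : (lam / 2 * ((p:ℝ) - (z + Cke / lam)) ^ 2 * rhom m z
            + (∫ e, hpen lam (phim m (u e - ↑p * η e)) ∂ρ₀)
            - ↑p * ∫ e in {e : ℝ | γ e = 0}, η e ∂ν)
          - (lam / 2 * ((p:ℝ) - (z' + Cke / lam)) ^ 2 * rhom m z'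
            + (∫ e, hpen lam (phim m (u' e - ↑p * η e)) ∂ρ₀)
            - ↑p * ∫ e in {e : ℝ | γ e = 0}, η e ∂ν)
          = lam/2 * (((p:ℝ) - (z + Cke/lam))^2 * rhom m z
              - ((p:ℝ) - (z' + Cke/lam))^2 * rhom m z')
            + ((∫ e, hpen lam (phim m (u e - ↑p * η e)) ∂ρ₀)
              - ∫ e, hpen lam (phim m (u' e - ↑p * η e)) ∂ρ₀) := by ring
      rw [hid]
      have e1 : |((p:ℝ) - (z + Cke/lam))^2 * rhom m z
          - ((p:ℝ) - (z' + Cke/lam))^2 * rhom m z'| ≤ (Q^2+2*Q) * |z - z'| := by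
        have := quad_rhom_diff m (Cke/lam) (p:ℝ) z z' hp
        rw [hQdef]
        convert this using 3 <;> ring
      have e2 : |(∫ e, hpen lam (phim m (u e - ↑p * η e)) ∂ρ₀)
          - ∫ e, hpen lam (phim m (u' e - ↑p * η e)) ∂ρ₀| ≤ CL * (c2 * W) := by
        rw [← integral_sub hIu hIu']
        calc |∫ e, (hpen lam (phim m (u e - ↑p * η e))
                - hpen lam (phim m (u' e - ↑p * η e))) ∂ρ₀|
            = ‖∫ e, (hpen lam (phim m (u e - ↑p * η e))
                - hpen lam (phim m (u' e - ↑p * η e))) ∂ρ₀‖ := (Real.norm_eq_abs _).symm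
          _ ≤ ∫ e, ‖hpen lam (phim m (u e - ↑p * η e))
                - hpen lam (phim m (u' e - ↑p * η e))‖ ∂ρ₀ := norm_integral_le_integral_norm _
          _ ≤ ∫ e, CL * |u e - u' e| ∂ρ₀ := by
              refine integral_mono (hIu.sub hIu').norm (hIρd.abs.const_mul CL) fun e => ?_
              rw [Real.norm_eq_abs]
              refine (Hm_lip hlam m _ _).trans (le_of_eq ?_)
              congr 1
              rw [show (u e - ↑p * η e) - (u' e - ↑p * η e) = u e - u' e by ring]
          _ = CL * ∫ e, |u e - u' e| ∂ρ₀ := integral_const_mul CL _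
          _ ≤ CL * (c2 * W) := mul_le_mul_of_nonneg_left hCSd' hCL0.le
      refine (abs_add_le _ _).trans ?_
      rw [abs_mul, abs_of_nonneg (by positivity : (0:ℝ) ≤ lam/2)]
      have := mul_le_mul_of_nonneg_left e1 (by positivity : (0:ℝ) ≤ lam/2)
      linarith
    exact abs_ciInf_sub_ciInf (hbdd z u hu hIρu) (hbdd z' u' hu' hIρu') hpt
  -- f2 part
  have claim2 : |(∫ g in ({0}ᶜ : Set ℝ), (⨅ p : ↥(Set.Icc (-pil) pib),
        f2m η γ K lam m g u p) ∂μ)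
      - ∫ g in ({0}ᶜ : Set ℝ), (⨅ p : ↥(Set.Icc (-pil) pib), f2m η γ K lam m g u' p) ∂μ|
      ≤ CL * (c2 * W) := by
    set μ' : Measure ℝ := μ.restrict ({0}ᶜ : Set ℝ) with hμ'def
    set νs : Measure ℝ := ν.restrict {e : ℝ | γ e ≠ 0} with hνsdef
    have hdisf : ∀ {f : ℝ → ℝ≥0∞}, Measurable f →
        ∫⁻ e, f e ∂νs = ∫⁻ g, (∫⁻ e, f e ∂(K g)) ∂μ' := fun {f} hf =>
      disint hγmeas hKmeas hdis hf
    have hbase_u_meas : Measurable fun e => T.indicator (fun e => |u e| + Mb*C₀) e :=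
      (hu.abs.add measurable_const).indicator hTmeas
    have hbase_u'_meas : Measurable fun e => T.indicator (fun e => |u' e| + Mb*C₀) e :=
      (hu'.abs.add measurable_const).indicator hTmeas
    have hbase_d_meas : Measurable fun e => T.indicator (fun e => |u e - u' e|) e :=
      ((hu.sub hu').abs).indicator hTmeas
    set NU : ℝ → ℝ≥0∞ :=
      fun g => ∫⁻ e, ENNReal.ofReal (T.indicator (fun e => |u e| + Mb*C₀) e) ∂(K g) with hNUdef
    set NU' : ℝ → ℝ≥0∞ :=
      fun g => ∫⁻ e, ENNReal.ofReal (T.indicator (fun e => |u' e| + Mb*C₀) e) ∂(K g) with hNU'def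
    set ND : ℝ → ℝ≥0∞ :=
      fun g => ∫⁻ e, ENNReal.ofReal (T.indicator (fun e => |u e - u' e|) e) ∂(K g) with hNDdef
    set NH : ℝ → ℝ≥0∞ := fun g => ∫⁻ e, ENNReal.ofReal |η e| ∂(K g) with hNHdef
    have hNUmeas : Measurable NU :=
      (Measure.measurable_lintegral hbase_u_meas.ennreal_ofReal).comp hKmeas
    have hNU'meas : Measurable NU' :=
      (Measure.measurable_lintegral hbase_u'_meas.ennreal_ofReal).comp hKmeas
    have hNDmeas : Measurable ND :=
      (Measure.measurable_lintegral hbase_d_meas.ennreal_ofReal).comp hKmeas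
    have hNHmeas : Measurable NH :=
      (Measure.measurable_lintegral hηmeas.abs.ennreal_ofReal).comp hKmeas
    have hNUfin : ∫⁻ g, NU g ∂μ' ≠ ⊤ := by
      rw [← hdisf hbase_u_meas.ennreal_ofReal]
      refine ne_of_lt (lt_of_le_of_lt (lintegral_mono' Measure.restrict_le_self le_rfl) ?_)
      refine lint_T_fin hTmeas hνT hu2 (1 + Mb*C₀) fun e => ?_
      rw [abs_of_nonneg (by positivity : (0:ℝ) ≤ |u e| + Mb*C₀),
        abs_of_nonneg (sq_nonneg (u e))]
      nlinarith [sq_abs (u e), abs_nonneg (u e), sq_nonneg (|u e| - 1)]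
    have hNU'fin : ∫⁻ g, NU' g ∂μ' ≠ ⊤ := by
      rw [← hdisf hbase_u'_meas.ennreal_ofReal]
      refine ne_of_lt (lt_of_le_of_lt (lintegral_mono' Measure.restrict_le_self le_rfl) ?_)
      refine lint_T_fin hTmeas hνT hu'2 (1 + Mb*C₀) fun e => ?_
      rw [abs_of_nonneg (by positivity : (0:ℝ) ≤ |u' e| + Mb*C₀),
        abs_of_nonneg (sq_nonneg (u' e))]
      nlinarith [sq_abs (u' e), abs_nonneg (u' e), sq_nonneg (|u' e| - 1)]
    have hNDfin : ∫⁻ g, ND g ∂μ' ≠ ⊤ := by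
      rw [← hdisf hbase_d_meas.ennreal_ofReal]
      refine ne_of_lt (lt_of_le_of_lt (lintegral_mono' Measure.restrict_le_self le_rfl) ?_)
      refine lint_T_fin hTmeas hνT hduu' 1 fun e => ?_
      rw [abs_abs, abs_of_nonneg (sq_nonneg (u e - u' e))]
      nlinarith [sq_abs (u e - u' e), abs_nonneg (u e - u' e), sq_nonneg (|u e - u' e| - 1)]
    have hNHfin : ∫⁻ g, NH g ∂μ' ≠ ⊤ := by
      rw [← hdisf hηmeas.abs.ennreal_ofReal]
      refine ne_of_lt (lt_of_le_of_lt (lintegral_mono' Measure.restrict_le_self le_rfl) ?_)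
      rw [← ofReal_integral_eq_lintegral_ofReal hηint.abs
        (Filter.Eventually.of_forall fun e => abs_nonneg _)]
      exact ENNReal.ofReal_lt_top
    have haeNU : ∀ᵐ g ∂μ', NU g < ⊤ := ae_lt_top hNUmeas hNUfin
    have haeNU' : ∀ᵐ g ∂μ', NU' g < ⊤ := ae_lt_top hNU'meas hNU'fin
    have haeND : ∀ᵐ g ∂μ', ND g < ⊤ := ae_lt_top hNDmeas hNDfin
    have haeNH : ∀ᵐ g ∂μ', NH g < ⊤ := ae_lt_top hNHmeas hNHfin
    have haeK : ∀ᵐ g ∂μ', (K g).restrict {e : ℝ | γ e = g} = K g ∧ K g univ = 1 := by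
      filter_upwards [hKprob] with g hg
      have hSm : MeasurableSet {e : ℝ | γ e = g} := hγmeas (measurableSet_singleton g)
      have hcompl : K g {e : ℝ | γ e = g}ᶜ = 0 := by
        rw [measure_compl hSm (by rw [hg.2]; exact ENNReal.one_ne_top), hg.1, hg.2, tsub_self]
      refine ⟨Measure.restrict_eq_self_of_ae_mem ?_, hg.1⟩
      rw [Filter.eventually_iff, mem_ae_iff]
      simpa using hcompl
    -- pointwise bounds
    have hptw : ∀ (v : ℝ → ℝ) (p : ℝ), |p| ≤ Mb → ∀ e : ℝ,
        |if 1 / (m:ℝ) < |e| then hpen lam (phim m (v e - p * η e)) else 0|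
          ≤ CL * (T.indicator (fun e => |v e| + Mb*C₀) e) := by
      intro v p hp e
      by_cases h : 1 / (m:ℝ) < |e|
      · rw [if_pos h, Set.indicator_of_mem ((hTiff e).1 h)]
        exact hHbd v p hp e
      · rw [if_neg h, Set.indicator_of_notMem (fun hmem => h ((hTiff e).2 hmem))]
        simp
    have hptwd : ∀ (p : ℝ), ∀ e : ℝ,
        |(if 1 / (m:ℝ) < |e| then hpen lam (phim m (u e - p * η e)) else 0)
          - (if 1 / (m:ℝ) < |e| then hpen lam (phim m (u' e - p * η e)) else 0)|
          ≤ CL * (T.indicator (fun e => |u e - u' e|) e) := by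
      intro p e
      by_cases h : 1 / (m:ℝ) < |e|
      · rw [if_pos h, if_pos h, Set.indicator_of_mem ((hTiff e).1 h)]
        refine (Hm_lip hlam m _ _).trans (le_of_eq ?_)
        congr 1
        rw [show (u e - p * η e) - (u' e - p * η e) = u e - u' e by ring]
      · rw [if_neg h, if_neg h, Set.indicator_of_notMem (fun hmem => h ((hTiff e).2 hmem))]
        simp
    have hptwp : ∀ (v : ℝ → ℝ) (p q : ℝ), ∀ e : ℝ,
        |(if 1 / (m:ℝ) < |e| then hpen lam (phim m (v e - p * η e)) else 0)
          - (if 1 / (m:ℝ) < |e| then hpen lam (phim m (v e - q * η e)) else 0)|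
          ≤ CL * C₀ * |p - q| := by
      intro v p q e
      by_cases h : 1 / (m:ℝ) < |e|
      · rw [if_pos h, if_pos h]
        refine (Hm_lip hlam m _ _).trans ?_
        rw [show (v e - p * η e) - (v e - q * η e) = (q - p) * η e by ring, abs_mul,
          mul_assoc]
        refine mul_le_mul_of_nonneg_left ?_ hCL0.le
        rw [abs_sub_comm q p, mul_comm]
        exact mul_le_mul_of_nonneg_right (hCb e) (abs_nonneg _)
      · rw [if_neg h, if_neg h]
        simp
        positivity
    have hitemeas : ∀ (v : ℝ → ℝ), Measurable v → ∀ p : ℝ,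
        Measurable (fun e => if 1 / (m:ℝ) < |e| then hpen lam (phim m (v e - p * η e)) else 0) := by
      intro v hv p
      exact Measurable.ite (measurableSet_lt measurable_const measurable_id.abs)
        (hHmeas v hv p) measurable_const
    have hbint : ∀ (b : ℝ → ℝ), Measurable b → (∀ e, 0 ≤ b e) → ∀ g : ℝ,
        (∫⁻ e, ENNReal.ofReal (b e) ∂(K g)) < ⊤ → Integrable b (K g) := by
      intro b hb hb0 g hg
      refine integrable_of_ofReal_lt_top hb.aestronglyMeasurable ?_
      rw [show (∫⁻ x, ENNReal.ofReal |b x| ∂(K g)) = ∫⁻ x, ENNReal.ofReal (b x) ∂(K g)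
        from lintegral_congr fun x => by rw [abs_of_nonneg (hb0 x)]]
      exact hg
    have hIite : ∀ (v : ℝ → ℝ), Measurable v → ∀ g : ℝ,
        (∫⁻ e, ENNReal.ofReal (T.indicator (fun e => |v e| + Mb*C₀) e) ∂(K g)) < ⊤ →
        ∀ p : ℝ, |p| ≤ Mb →
        Integrable (fun e => if 1/(m:ℝ) < |e| then hpen lam (phim m (v e - p * η e)) else 0)
          (K g) := by
      intro v hv g hg p hp
      refine Integrable.mono' ((hbint (fun e => T.indicator (fun e => |v e| + Mb*C₀) e) ((hv.abs.add measurable_const : Measurable fun e => |v e| + Mb*C₀).indicator hTmeas)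
        (fun e => Set.indicator_nonneg (fun e _ => by positivity) e) g hg).const_mul CL)
        ((hitemeas v hv p).aestronglyMeasurable) (Filter.Eventually.of_forall fun e => ?_)
      rw [Real.norm_eq_abs]
      exact hptw v p hp e
    have hIηg : ∀ g : ℝ, NH g < ⊤ → Integrable η (K g) := fun g hg =>
      integrable_of_ofReal_lt_top hηmeas.aestronglyMeasurable hg
    have hf2eq : ∀ g : ℝ, (K g).restrict {e : ℝ | γ e = g} = K g → ∀ (v : ℝ → ℝ) (p : ℝ),
        f2m η γ K lam m g v p
          = (∫ e, (if 1/(m:ℝ) < |e| then hpen lam (phim m (v e - p * η e)) else 0) ∂(K g))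
            - p * ∫ e, η e ∂(K g) := by
      intro g hrg v p
      unfold f2m
      rw [hrg]
    have hIηbd : ∀ g : ℝ, NH g < ⊤ → |∫ e, η e ∂(K g)| ≤ (NH g).toReal := by
      intro g hg
      have h5 : |∫ e, η e ∂(K g)| ≤ ∫ e, |η e| ∂(K g) := by
        rw [← Real.norm_eq_abs]
        refine (norm_integral_le_integral_norm _).trans (le_of_eq ?_)
        simp [Real.norm_eq_abs]
      have h6 : ∫ e, |η e| ∂(K g) = (NH g).toReal := by
        rw [integral_eq_lintegral_of_nonneg_ae (Filter.Eventually.of_forall fun e => abs_nonneg _)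
          hηmeas.abs.aestronglyMeasurable]
      linarith
    have hIbase : ∀ (v : ℝ → ℝ), Measurable v → ∀ g : ℝ,
        (∫⁻ e, ENNReal.ofReal (T.indicator (fun e => |v e| + Mb*C₀) e) ∂(K g)) < ⊤ →
        (Integrable (fun e => T.indicator (fun e => |v e| + Mb*C₀) e) (K g) ∧
          ∫ e, T.indicator (fun e => |v e| + Mb*C₀) e ∂(K g)
            = (∫⁻ e, ENNReal.ofReal (T.indicator (fun e => |v e| + Mb*C₀) e) ∂(K g)).toReal) := by
      intro v hv g hg
      refine ⟨hbint (fun e => T.indicator (fun e => |v e| + Mb*C₀) e) ((hv.abs.add measurable_const : Measurable fun e => |v e| + Mb*C₀).indicator hTmeas)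
        (fun e => Set.indicator_nonneg (fun e _ => by positivity) e) g hg, ?_⟩
      rw [integral_eq_lintegral_of_nonneg_ae (f := fun e => T.indicator (fun e => |v e| + Mb*C₀) e)
        (Filter.Eventually.of_forall fun e => Set.indicator_nonneg (fun e _ => by positivity) e)
        ((hv.abs.add measurable_const : Measurable fun e => |v e| + Mb*C₀).indicator hTmeas).aestronglyMeasurable]
    have hC1 : ∀ (v : ℝ → ℝ), Measurable v → ∀ g : ℝ,
        (K g).restrict {e : ℝ | γ e = g} = K g →
        (∫⁻ e, ENNReal.ofReal (T.indicator (fun e => |v e| + Mb*C₀) e) ∂(K g)) < ⊤ →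
        NH g < ⊤ → ∀ p : ↥(Set.Icc (-pil) pib),
        |f2m η γ K lam m g v p|
          ≤ CL * (∫⁻ e, ENNReal.ofReal (T.indicator (fun e => |v e| + Mb*C₀) e) ∂(K g)).toReal
            + Mb * (NH g).toReal := by
      intro v hv g hrg hgv hgH p
      rw [hf2eq g hrg]
      refine (abs_sub _ _).trans (add_le_add ?_ ?_)
      · calc |∫ e, (if 1/(m:ℝ) < |e| then hpen lam (phim m (v e - ↑p * η e)) else 0) ∂(K g)|
            = ‖∫ e, (if 1/(m:ℝ) < |e| then hpen lam (phim m (v e - ↑p * η e)) else 0) ∂(K g)‖ :=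
              (Real.norm_eq_abs _).symm
          _ ≤ ∫ e, ‖if 1/(m:ℝ) < |e| then hpen lam (phim m (v e - ↑p * η e)) else 0‖ ∂(K g) :=
              norm_integral_le_integral_norm _
          _ ≤ ∫ e, CL * (T.indicator (fun e => |v e| + Mb*C₀) e) ∂(K g) := by
              refine integral_mono (hIite v hv g hgv p (hpmem p)).norm
                ((hIbase v hv g hgv).1.const_mul CL) fun e => ?_
              rw [Real.norm_eq_abs]
              exact hptw v p (hpmem p) e
          _ = CL * ∫ e, T.indicator (fun e => |v e| + Mb*C₀) e ∂(K g) := integral_const_mul CL _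
          _ = CL * (∫⁻ e, ENNReal.ofReal (T.indicator (fun e => |v e| + Mb*C₀) e) ∂(K g)).toReal := by
              rw [(hIbase v hv g hgv).2]
      · rw [abs_mul]
        exact mul_le_mul (hpmem p) (hIηbd g hgH) (abs_nonneg _) hMb0.le
    have hC2 : ∀ g : ℝ, (K g).restrict {e : ℝ | γ e = g} = K g →
        NU g < ⊤ → NU' g < ⊤ → ND g < ⊤ → ∀ p : ↥(Set.Icc (-pil) pib),
        |f2m η γ K lam m g u p - f2m η γ K lam m g u' p| ≤ CL * (ND g).toReal := by
      intro g hrg hgU hgU' hgD p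
      rw [hf2eq g hrg u p, hf2eq g hrg u' p, sub_sub_sub_cancel_right,
        ← integral_sub (hIite u hu g hgU p (hpmem p)) (hIite u' hu' g hgU' p (hpmem p))]
      have hbd : Integrable (fun e => T.indicator (fun e => |u e - u' e|) e) (K g) :=
        hbint _ hbase_d_meas (fun e => Set.indicator_nonneg (fun e _ => abs_nonneg _) e) g hgD
      calc |∫ e, ((if 1/(m:ℝ) < |e| then hpen lam (phim m (u e - ↑p * η e)) else 0)
              - (if 1/(m:ℝ) < |e| then hpen lam (phim m (u' e - ↑p * η e)) else 0)) ∂(K g)|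
          = ‖∫ e, ((if 1/(m:ℝ) < |e| then hpen lam (phim m (u e - ↑p * η e)) else 0)
              - (if 1/(m:ℝ) < |e| then hpen lam (phim m (u' e - ↑p * η e)) else 0)) ∂(K g)‖ :=
            (Real.norm_eq_abs _).symm
        _ ≤ ∫ e, ‖(if 1/(m:ℝ) < |e| then hpen lam (phim m (u e - ↑p * η e)) else 0)
              - (if 1/(m:ℝ) < |e| then hpen lam (phim m (u' e - ↑p * η e)) else 0)‖ ∂(K g) :=
            norm_integral_le_integral_norm _
        _ ≤ ∫ e, CL * (T.indicator (fun e => |u e - u' e|) e) ∂(K g) := by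
            refine integral_mono ((hIite u hu g hgU p (hpmem p)).sub
              (hIite u' hu' g hgU' p (hpmem p))).norm (hbd.const_mul CL) fun e => ?_
            rw [Real.norm_eq_abs]
            exact hptwd p e
        _ = CL * ∫ e, T.indicator (fun e => |u e - u' e|) e ∂(K g) := integral_const_mul CL _
        _ = CL * (ND g).toReal := by
            rw [integral_eq_lintegral_of_nonneg_ae
              (Filter.Eventually.of_forall fun e => Set.indicator_nonneg (fun e _ => abs_nonneg _) e)
              hbase_d_meas.aestronglyMeasurable]
    set d : ℕ → ↥(Set.Icc (-pil) pib) := TopologicalSpace.denseSeq _ with hddef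
    have hdr : DenseRange d := TopologicalSpace.denseRange_denseSeq _
    have hbddg : ∀ (v : ℝ → ℝ), Measurable v → ∀ g : ℝ,
        (K g).restrict {e : ℝ | γ e = g} = K g →
        (∫⁻ e, ENNReal.ofReal (T.indicator (fun e => |v e| + Mb*C₀) e) ∂(K g)) < ⊤ →
        NH g < ⊤ →
        BddBelow (range fun p : ↥(Set.Icc (-pil) pib) => f2m η γ K lam m g v p) := by
      intro v hv g hrg hgv hgH
      refine ⟨-(CL * (∫⁻ e, ENNReal.ofReal (T.indicator (fun e => |v e| + Mb*C₀) e) ∂(K g)).toReal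
        + Mb * (NH g).toReal), ?_⟩
      rintro x ⟨p, rfl⟩
      dsimp only
      linarith [(abs_le.1 (hC1 v hv g hrg hgv hgH p)).1]
    have hC3 : ∀ (v : ℝ → ℝ), Measurable v → ∀ g : ℝ,
        (K g).restrict {e : ℝ | γ e = g} = K g → K g univ = 1 →
        (∫⁻ e, ENNReal.ofReal (T.indicator (fun e => |v e| + Mb*C₀) e) ∂(K g)) < ⊤ →
        NH g < ⊤ →
        (⨅ p : ↥(Set.Icc (-pil) pib), f2m η γ K lam m g v p)
          = ⨅ n : ℕ, f2m η γ K lam m g v (d n) := by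
      intro v hv g hrg hg1 hgv hgH
      haveI : IsFiniteMeasure (K g) := ⟨by rw [hg1]; exact ENNReal.one_lt_top⟩
      refine ciInf_eq_ciInf_dense d hdr ?_ (hbddg v hv g hrg hgv hgH)
      have hlip : ∀ p q : ↥(Set.Icc (-pil) pib),
          |f2m η γ K lam m g v p - f2m η γ K lam m g v q|
            ≤ (CL*C₀ + (NH g).toReal) * |(p:ℝ) - (q:ℝ)| := by
        intro p q
        rw [hf2eq g hrg v p, hf2eq g hrg v q]
        have hid : ((∫ e, (if 1/(m:ℝ) < |e| then hpen lam (phim m (v e - ↑p * η e)) else 0) ∂(K g))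
              - ↑p * ∫ e, η e ∂(K g))
            - ((∫ e, (if 1/(m:ℝ) < |e| then hpen lam (phim m (v e - ↑q * η e)) else 0) ∂(K g))
              - ↑q * ∫ e, η e ∂(K g))
            = ((∫ e, (if 1/(m:ℝ) < |e| then hpen lam (phim m (v e - ↑p * η e)) else 0) ∂(K g))
              - (∫ e, (if 1/(m:ℝ) < |e| then hpen lam (phim m (v e - ↑q * η e)) else 0) ∂(K g)))
              + ((↑q:ℝ) - ↑p) * ∫ e, η e ∂(K g) := by ring
        rw [hid]
        refine (abs_add_le _ _).trans ?_
        have e1 : |(∫ e, (if 1/(m:ℝ) < |e| then hpen lam (phim m (v e - ↑p * η e)) else 0) ∂(K g))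
            - ∫ e, (if 1/(m:ℝ) < |e| then hpen lam (phim m (v e - ↑q * η e)) else 0) ∂(K g)|
            ≤ CL * C₀ * |(p:ℝ) - ↑q| := by
          rw [← integral_sub (hIite v hv g hgv p (hpmem p)) (hIite v hv g hgv q (hpmem q)),
            ← Real.norm_eq_abs]
          refine (norm_integral_le_integral_norm _).trans ?_
          have : ∀ e : ℝ, ‖(if 1/(m:ℝ) < |e| then hpen lam (phim m (v e - ↑p * η e)) else 0)
              - (if 1/(m:ℝ) < |e| then hpen lam (phim m (v e - ↑q * η e)) else 0)‖
              ≤ CL * C₀ * |(p:ℝ) - ↑q| := fun e => by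
            rw [Real.norm_eq_abs]; exact hptwp v p q e
          refine le_trans (integral_mono ((hIite v hv g hgv p (hpmem p)).sub
            (hIite v hv g hgv q (hpmem q))).norm (integrable_const _) this) ?_
          rw [integral_const, smul_eq_mul, measureReal_def, hg1]
          simp
        have e2 : |((q:ℝ) - ↑p) * ∫ e, η e ∂(K g)| ≤ (NH g).toReal * |(p:ℝ) - ↑q| := by
          rw [abs_mul, abs_sub_comm, mul_comm]
          exact mul_le_mul_of_nonneg_right (hIηbd g hgH) (abs_nonneg _)
        nlinarith [abs_nonneg ((p:ℝ) - ↑q)]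
      refine LipschitzWith.continuous (LipschitzWith.of_dist_le_mul
        (K := Real.toNNReal (CL*C₀ + (NH g).toReal)) fun p q => ?_)
      rw [Subtype.dist_eq, Real.dist_eq, Real.dist_eq]
      exact (hlip p q).trans (mul_le_mul_of_nonneg_right (Real.le_coe_toNNReal _) (abs_nonneg _))
    have hmodel : ∀ (v : ℝ → ℝ), Measurable v → ∀ p : ℝ, Measurable (fun g : ℝ =>
        (∫⁻ e, ENNReal.ofReal (if 1/(m:ℝ) < |e| then hpen lam (phim m (v e - p * η e)) else 0)
          ∂(K g)).toReal
        - (∫⁻ e, ENNReal.ofReal (-(if 1/(m:ℝ) < |e| then hpen lam (phim m (v e - p * η e)) else 0))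
          ∂(K g)).toReal
        - p * ((∫⁻ e, ENNReal.ofReal (η e) ∂(K g)).toReal
          - (∫⁻ e, ENNReal.ofReal (-(η e)) ∂(K g)).toReal)) := by
      intro v hv p
      have m1 := (Measure.measurable_lintegral (hitemeas v hv p).ennreal_ofReal).comp hKmeas
      have m2 := (Measure.measurable_lintegral (hitemeas v hv p).neg.ennreal_ofReal).comp hKmeas
      have m3 := (Measure.measurable_lintegral hηmeas.ennreal_ofReal).comp hKmeas
      have m4 := (Measure.measurable_lintegral hηmeas.neg.ennreal_ofReal).comp hKmeas
      exact (m1.ennreal_toReal.sub m2.ennreal_toReal).sub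
        ((m3.ennreal_toReal.sub m4.ennreal_toReal).const_mul p)
    have hAn : ∀ (v : ℝ → ℝ), (hv : Measurable v) →
        (∀ᵐ g ∂μ', (∫⁻ e, ENNReal.ofReal (T.indicator (fun e => |v e| + Mb*C₀) e) ∂(K g)) < ⊤) →
        ∀ p : ↥(Set.Icc (-pil) pib),
          AEMeasurable (fun g => f2m η γ K lam m g v p) μ' := by
      intro v hv hfin p
      refine (hmodel v hv p).aemeasurable.congr ?_
      filter_upwards [haeK, hfin, haeNH] with g hKg hgv hgH
      rw [hf2eq g hKg.1 v p,
        integral_eq_lintegral_pos_part_sub_lintegral_neg_part (hIite v hv g hgv p (hpmem p)),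
        integral_eq_lintegral_pos_part_sub_lintegral_neg_part (hIηg g hgH)]
    have hFmeas : AEMeasurable (fun g => ⨅ p : ↥(Set.Icc (-pil) pib),
        f2m η γ K lam m g u p) μ' := by
      refine (AEMeasurable.iInf (fun n => hAn u hu haeNU (d n))).congr ?_
      filter_upwards [haeK, haeNU, haeNH] with g hKg hgU hgH
      exact (hC3 u hu g hKg.1 hKg.2 hgU hgH).symm
    have hFmeas' : AEMeasurable (fun g => ⨅ p : ↥(Set.Icc (-pil) pib),
        f2m η γ K lam m g u' p) μ' := by
      refine (AEMeasurable.iInf (fun n => hAn u' hu' haeNU' (d n))).congr ?_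
      filter_upwards [haeK, haeNU', haeNH] with g hKg hgU hgH
      exact (hC3 u' hu' g hKg.1 hKg.2 hgU hgH).symm
    have hFint : Integrable (fun g => ⨅ p : ↥(Set.Icc (-pil) pib),
        f2m η γ K lam m g u p) μ' := by
      refine Integrable.mono' (g := fun g => CL * (NU g).toReal + Mb * (NH g).toReal)
        (((integrable_toReal_of_lintegral_ne_top hNUmeas.aemeasurable hNUfin).const_mul CL).add
         ((integrable_toReal_of_lintegral_ne_top hNHmeas.aemeasurable hNHfin).const_mul Mb))
        hFmeas.aestronglyMeasurable ?_
      filter_upwards [haeK, haeNU, haeNH] with g hKg hgU hgH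
      rw [Real.norm_eq_abs]
      exact abs_ciInf_le fun p => hC1 u hu g hKg.1 hgU hgH p
    have hFint' : Integrable (fun g => ⨅ p : ↥(Set.Icc (-pil) pib),
        f2m η γ K lam m g u' p) μ' := by
      refine Integrable.mono' (g := fun g => CL * (NU' g).toReal + Mb * (NH g).toReal)
        (((integrable_toReal_of_lintegral_ne_top hNU'meas.aemeasurable hNU'fin).const_mul CL).add
         ((integrable_toReal_of_lintegral_ne_top hNHmeas.aemeasurable hNHfin).const_mul Mb))
        hFmeas'.aestronglyMeasurable ?_
      filter_upwards [haeK, haeNU', haeNH] with g hKg hgU hgH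
      rw [Real.norm_eq_abs]
      exact abs_ciInf_le fun p => hC1 u' hu' g hKg.1 hgU hgH p
    have haediff : ∀ᵐ g ∂μ',
        |(⨅ p : ↥(Set.Icc (-pil) pib), f2m η γ K lam m g u p)
          - ⨅ p : ↥(Set.Icc (-pil) pib), f2m η γ K lam m g u' p| ≤ CL * (ND g).toReal := by
      filter_upwards [haeK, haeNU, haeNU', haeND, haeNH] with g hKg hgU hgU' hgD hgH
      exact abs_ciInf_sub_ciInf (hbddg u hu g hKg.1 hgU hgH) (hbddg u' hu' g hKg.1 hgU' hgH)
        fun p => hC2 g hKg.1 hgU hgU' hgD p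
    have hNDint : Integrable (fun g => (ND g).toReal) μ' :=
      integrable_toReal_of_lintegral_ne_top hNDmeas.aemeasurable hNDfin
    rw [← integral_sub hFint hFint']
    have hρT : (νs.restrict T) ≤ ν := le_trans Measure.restrict_le_self Measure.restrict_le_self
    have hρTuniv : (νs.restrict T) univ ≤ ν T := by
      rw [Measure.restrict_apply_univ]
      exact Measure.le_iff'.1 Measure.restrict_le_self T
    have hfinT : (νs.restrict T) univ ≠ ⊤ := ne_top_of_le_ne_top hνT hρTuniv
    have hCS2 := lintegral_abs_le_sqrt hρT hfinT (hu.sub hu') hduu'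
    have hstep : ∫⁻ g, ND g ∂μ' = ∫⁻ e, ENNReal.ofReal |u e - u' e| ∂(νs.restrict T) := by
      rw [hNDdef, ← hdisf hbase_d_meas.ennreal_ofReal]
      rw [show (fun e => ENNReal.ofReal (T.indicator (fun e => |u e - u' e|) e))
          = fun e => T.indicator (fun e => ENNReal.ofReal |u e - u' e|) e
          from funext fun e => ofReal_indicator' _ e]
      exact lintegral_indicator hTmeas _
    rw [← Real.norm_eq_abs]
    refine le_trans (norm_integral_le_integral_norm _) ?_
    refine le_trans (integral_mono_ae (hFint.sub hFint').norm (hNDint.const_mul CL) ?_) ?_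
    · filter_upwards [haediff] with g hg
      rw [Real.norm_eq_abs]
      exact hg
    · rw [integral_const_mul CL _, integral_toReal hNDmeas.aemeasurable haeND]
      refine mul_le_mul_of_nonneg_left ?_ hCL0.le
      rw [hstep]
      calc (∫⁻ e, ENNReal.ofReal |u e - u' e| ∂(νs.restrict T)).toReal
          ≤ (ENNReal.ofReal (Real.sqrt (((νs.restrict T) univ).toReal)
              * Real.sqrt (∫ e, (u e - u' e)^2 ∂ν))).toReal :=
            ENNReal.toReal_mono ENNReal.ofReal_ne_top hCS2
        _ = Real.sqrt (((νs.restrict T) univ).toReal)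
            * Real.sqrt (∫ e, (u e - u' e)^2 ∂ν) := ENNReal.toReal_ofReal (by positivity)
        _ ≤ c2 * W := mul_le_mul_of_nonneg_right
            (Real.sqrt_le_sqrt (ENNReal.toReal_mono hνT hρTuniv)) hW0
  -- assembly
  unfold fm
  have hexp : ∀ A A' B B' : ℝ,
      (A + B - Cke * z - Cke^2/(2*lam)) - (A' + B' - Cke * z' - Cke^2/(2*lam))
      = (A - A') + (B - B') + (-Cke) * (z - z') := by intro A A' B B'; ring
  rw [hexp]
  refine le_trans (abs_add_le _ _) ?_
  refine le_trans (add_le_add (abs_add_le _ _) (le_refl _)) ?_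
  have h3 : |(-Cke) * (z - z')| ≤ |Cke| * |z - z'| := by
    rw [abs_mul, abs_neg]
  have hzz : (0:ℝ) ≤ |z - z'| := abs_nonneg _
  have ha : (0:ℝ) ≤ lam/2*(Q^2+2*Q) := by positivity
  have hL : lam/2*(Q^2+2*Q) * |z - z'| + CL*(c2*W) + CL*(c2*W) + |Cke| * |z - z'|
      ≤ (lam/2*(Q^2+2*Q) + |Cke| + 2*CL*(c2+1) + 1) * (|z - z'| + W) := by
    nlinarith [mul_nonneg ha hW0, mul_nonneg (abs_nonneg Cke) hW0,
      mul_nonneg (mul_nonneg hCL0.le hc20) hzz, mul_nonneg hCL0.le hzz,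
      mul_nonneg hCL0.le hW0, hzz, hW0]
  linarith [claim1, claim2, h3, hL]
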